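/- Let (X, r) be an involutive near-rack solution, i.e. a near-rack solution with r² = id on X × X. Then σ_x = τ for all x ∈ X, and consequently r(x,y) = (τ(y), τ(x)) for all x, y ∈ X. -/
import Mathlib


def rFst {X : Type*} (r : X × X → X × X) : X × X × X → X × X × X :=
  fun p => ((r (p.1, p.2.1)).1, (r (p.1, p.2.1)).2, p.2.2)

def rSnd {X : Type*} (r : X × X → X × X) : X × X × X → X × X × X :=
  fun p => (p.1, r (p.2.1, p.2.2))

def IsYB {X : Type*} (r : X × X → X × X) : Prop :=
  rFst r ∘ rSnd r ∘ rFst r = rSnd r ∘ rFst r ∘ rSnd r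

/-- `(X, r)` is a near-rack solution of the Yang–Baxter equation with data `σ, τ`. -/
structure IsNearRackSolution {X : Type*} (r : X × X → X × X)
    (σ : X → X → X) (τ : X → X) : Prop where
  hr : ∀ x y : X, r (x, y) = (σ x y, τ x)
  hYB : IsYB r
  hrbij : Function.Bijective r
  hσbij : ∀ x : X, Function.Bijective (σ x)
  hτbij : Function.Bijective τ
  hτ2 : τ ∘ τ = id
  hτne : τ ≠ id

theorem stmt12 {X : Type*} (r : X × X → X × X) (σ : X → X → X) (τ : X → X)
    (h : IsNearRackSolution r σ τ) (hinv : r ∘ r = id) :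
    (∀ x : X, σ x = τ) ∧ ∀ x y : X, r (x, y) = (τ y, τ x) := by
  have key : ∀ x : X, σ x = τ := by
    intro x
    funext y
    have h1 : r (r (x, y)) = (x, y) := congrFun hinv (x, y)
    rw [h.hr x y, h.hr (σ x y) (τ x)] at h1
    have h2 : τ (σ x y) = y := (Prod.mk.injEq _ _ _ _ ▸ h1).2
    have := congrFun h.hτ2 (σ x y)
    simp only [Function.comp_apply, id_eq, h2] at this
    exact this.symm
  exact ⟨key, fun x y => by rw [h.hr x y, key x]⟩
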